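/- Let R be a commutative Bezout ring and let a ∈ R be a regular element. Then the quotient ring R/aR is a reduced ring if and only if a is an inpseudo-irreducible element of R. -/

import Mathlib

/-- A regular element: a nonzero element that is not a zero divisor. -/
def IsRegularElem {R : Type*} [CommRing R] (a : R) : Prop :=
  a ≠ 0 ∧ ∀ x : R, a * x = 0 → x = 0

/-- Stable range 2. -/
def HasStableRange2 (R : Type*) [CommRing R] : Prop :=
  ∀ a b c : R, Ideal.span {a, b, c} = ⊤ →
    ∃ x y : R, Ideal.span {a + c * x, b + c * y} = ⊤

/-- Stable range 1. -/
def HasStableRange1 (S : Type*) [CommRing S] : Prop :=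
  ∀ a b : S, Ideal.span {a, b} = ⊤ → ∃ y : S, IsUnit (a + b * y)

/-- Inpseudo-irreducible element: any factorization is comaximal. -/
def IsInpseudoIrreducible {R : Type*} [CommRing R] (a : R) : Prop :=
  ∀ b c : R, a = b * c → Ideal.span {b, c} = ⊤

/-- Pseudo-irreducible element. -/
def IsPseudoIrreducible {R : Type*} [CommRing R] (a : R) : Prop :=
  ∀ b c : R, a = b * c → ¬IsUnit b → ¬IsUnit c → Ideal.span {b, c} ≠ ⊤

/-- Adequate element of a Bezout ring. -/
def IsAdequateElem {R : Type*} [CommRing R] (a : R) : Prop :=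
  ∀ b : R, ∃ r s : R, a = r * s ∧ Ideal.span {r, b} = ⊤ ∧
    ∀ s' : R, ¬IsUnit s' → s' ∣ s → Ideal.span {s', b} ≠ ⊤

/-- Avoidable element. -/
def IsAvoidableElem {R : Type*} [CommRing R] (a : R) : Prop :=
  ∀ b c : R, Ideal.span {a, b, c} = ⊤ →
    ∃ r s : R, a = r * s ∧ Ideal.span {r, b} = ⊤ ∧ Ideal.span {s, c} = ⊤ ∧
      Ideal.span {r, s} = ⊤

/-- Gelfand element. -/
def IsGelfandElem {R : Type*} [CommRing R] (a : R) : Prop :=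
  ∀ b c : R, Ideal.span {a, b, c} = ⊤ →
    ∃ r s : R, a = r * s ∧ Ideal.span {r, b} = ⊤ ∧ Ideal.span {s, c} = ⊤

/-- Semipotent element. -/
def IsSemipotentElem {R : Type*} [CommRing R] (a : R) : Prop :=
  ∀ b : R,
    Ideal.Quotient.mk (Ideal.span {a}) b ∉
      Ideal.jacobson (⊥ : Ideal (R ⧸ Ideal.span ({a} : Set R))) →
    ∃ r s : R, ¬IsUnit r ∧ ¬IsUnit s ∧ a = r * s ∧
      Ideal.span {r, b} = ⊤ ∧ Ideal.span {r, s} = ⊤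

/-- Gelfand ring. -/
def IsGelfandRing (S : Type*) [CommRing S] : Prop :=
  ∀ a b : S, a + b = 1 → ∃ r s : S, (1 + a * r) * (1 + b * s) = 0

/-- Clean ring: every element is a unit plus an idempotent. -/
def IsCleanRing (S : Type*) [CommRing S] : Prop :=
  ∀ a : S, ∃ u e : S, IsUnit u ∧ IsIdempotentElem e ∧ a = u + e

/-- Von Neumann regular ring. -/
def IsVNRegularRing (S : Type*) [CommRing S] : Prop :=
  ∀ a : S, ∃ x : S, a = a * x * a

/-- Semiregular ring: S/J(S) is von Neumann regular and idempotents lift modulo J(S). -/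
def IsSemiregularRing (S : Type*) [CommRing S] : Prop :=
  IsVNRegularRing (S ⧸ Ideal.jacobson (⊥ : Ideal S)) ∧
  ∀ x : S, IsIdempotentElem (Ideal.Quotient.mk (Ideal.jacobson (⊥ : Ideal S)) x) →
    ∃ e : S, IsIdempotentElem e ∧
      Ideal.Quotient.mk (Ideal.jacobson (⊥ : Ideal S)) e =
        Ideal.Quotient.mk (Ideal.jacobson (⊥ : Ideal S)) x

/-- Semipotent ring: every principal ideal not contained in the Jacobson radical
contains a nonzero idempotent. -/
def IsSemipotentRing (S : Type*) [CommRing S] : Prop :=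
  ∀ b : S, ¬(Ideal.span {b} ≤ Ideal.jacobson (⊥ : Ideal S)) →
    ∃ e : S, e ≠ 0 ∧ IsIdempotentElem e ∧ e ∈ Ideal.span ({b} : Set S)

/-- Indecomposable ring: the only idempotents are 0 and 1. -/
def IsIndecomposableRing (S : Type*) [CommRing S] : Prop :=
  ∀ e : S, IsIdempotentElem e → e = 0 ∨ e = 1

/-- Semihereditary ring: every finitely generated ideal is projective. -/
def IsSemihereditaryRing (R : Type*) [CommRing R] : Prop :=
  ∀ I : Ideal R, I.FG → Module.Projective R I

/-- Regular range 1. -/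
def HasRegularRange1 (R : Type*) [CommRing R] : Prop :=
  ∀ a b : R, Ideal.span {a, b} = ⊤ → ∃ t : R, IsRegularElem (a + b * t)

/-- Gelfand range 1. -/
def HasGelfandRange1 (R : Type*) [CommRing R] : Prop :=
  ∀ a b : R, Ideal.span {a, b} = ⊤ → ∃ t : R, IsGelfandElem (a + b * t)

/-- A rectangular matrix admits diagonal reduction with successive divisibility
of the diagonal entries. -/
def AdmitsDiagReduction {R : Type*} [CommRing R] {n m : ℕ}
    (A : Matrix (Fin n) (Fin m) R) : Prop :=
  ∃ (P : Matrix (Fin n) (Fin n) R) (Q : Matrix (Fin m) (Fin m) R),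
    IsUnit P ∧ IsUnit Q ∧
    (∀ (i : Fin n) (j : Fin m), (i : ℕ) ≠ (j : ℕ) → (P * A * Q) i j = 0) ∧
    (∀ (k : ℕ) (hn : k + 1 < n) (hm : k + 1 < m),
      (P * A * Q) ⟨k, Nat.lt_of_succ_lt hn⟩ ⟨k, Nat.lt_of_succ_lt hm⟩ ∣
        (P * A * Q) ⟨k + 1, hn⟩ ⟨k + 1, hm⟩)

/-- Elementary divisor ring: every matrix admits diagonal reduction. -/
def IsElementaryDivisorRing (R : Type*) [CommRing R] : Prop :=
  ∀ (n m : ℕ) (A : Matrix (Fin n) (Fin m) R), AdmitsDiagReduction A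


theorem stmt5 {R : Type*} [CommRing R] [IsBezout R] (a : R)
    (hreg : IsRegularElem a) :
    IsReduced (R ⧸ Ideal.span ({a} : Set R)) ↔ IsInpseudoIrreducible a := by
  obtain ⟨ha0, hareg⟩ := hreg
  have hcancel : ∀ d : R, d ∣ a → ∀ t : R, d * t = 0 → t = 0 := by
    rintro d ⟨e, rfl⟩ t ht
    exact hareg t (by linear_combination e * ht)
  constructor
  · intro hred b c habc
    obtain ⟨b', hb'⟩ := IsBezout.gcd_dvd_left b c
    obtain ⟨c', hc'⟩ := IsBezout.gcd_dvd_right b c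
    obtain ⟨α, β, hsum⟩ := IsBezout.gcd_eq_sum b c
    set d := IsBezout.gcd b c with hd
    have hd_dvd : d ∣ a := (IsBezout.gcd_dvd_left b c).trans ⟨c, habc⟩
    have ha : a = d * d * (b' * c') := by rw [habc, hb', hc']; ring
    -- show d * b' * c' squares to zero mod a
    have hsq : ((Ideal.Quotient.mk (Ideal.span ({a} : Set R))) (d * b' * c')) ^ 2 = 0 := by
      rw [← map_pow, Ideal.Quotient.eq_zero_iff_mem, Ideal.mem_span_singleton]
      exact ⟨b' * c', by rw [ha]; ring⟩
    have hzero := hred.eq_zero _ ⟨2, hsq⟩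
    rw [Ideal.Quotient.eq_zero_iff_mem, Ideal.mem_span_singleton] at hzero
    obtain ⟨t, ht⟩ := hzero
    -- cancel d : b' * c' = d * b' * c' * t
    have h2 : b' * c' * (1 - d * t) = 0 := by
      have : d * (b' * c' * (1 - d * t)) = 0 := by
        rw [ha] at ht; linear_combination ht
      exact hcancel d hd_dvd _ this
    -- b' * c' is regular since a = d * d * (b' * c')
    have hbc' : (1 : R) - d * t = 0 := by
      by_contra h
      exact h (hareg _ (by rw [ha]; linear_combination (d * d) * h2))
    have hdu : IsUnit d := IsUnit.of_mul_eq_one t (by linear_combination -hbc')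
    rw [← IsBezout.span_gcd b c, Ideal.span_singleton_eq_top]
    exact hdu
  · intro hinp
    rw [isReduced_iff_pow_one_lt 2 one_lt_two]
    intro x hx
    obtain ⟨x, rfl⟩ := Ideal.Quotient.mk_surjective x
    rw [← map_pow, Ideal.Quotient.eq_zero_iff_mem, Ideal.mem_span_singleton] at hx
    obtain ⟨s, hs⟩ := hx
    obtain ⟨c, hc⟩ := IsBezout.gcd_dvd_left a x
    obtain ⟨x', hx'⟩ := IsBezout.gcd_dvd_right a x
    obtain ⟨α, β, hsum⟩ := IsBezout.gcd_eq_sum a x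
    set d := IsBezout.gcd a x with hd
    have hd_dvd : d ∣ a := ⟨c, hc⟩
    -- 1 = α * c + β * x'
    have h1 : α * c + β * x' = 1 := by
      have : d * (α * c + β * x' - 1) = 0 := by
        rw [hc, hx'] at hsum; linear_combination hsum
      have := hcancel d hd_dvd _ this
      linear_combination this
    -- span {d, c} = ⊤ from inpseudo-irreducibility
    have htop := hinp d c hc
    rw [Ideal.eq_top_iff_one, Ideal.mem_span_pair] at htop
    obtain ⟨u, v, huv⟩ := htop
    -- d * x'^2 = c * s
    have h3 : d * (x' * x') = c * s := by
      have : d * (d * (x' * x') - c * s) = 0 := by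
        rw [hc, hx'] at hs; linear_combination hs
      have := hcancel d hd_dvd _ this
      linear_combination this
    -- c ∣ x'^2, hence c ∣ x'
    have h4 : x' * x' = c * (u * s + v * (x' * x')) := by
      linear_combination (-(x' * x')) * huv + u * h3
    have h5 : x' = c * (α * x' + β * (u * s + v * (x' * x'))) := by
      linear_combination (-x') * h1 + β * h4
    rw [Ideal.Quotient.eq_zero_iff_mem, Ideal.mem_span_singleton]
    exact ⟨α * x' + β * (u * s + v * (x' * x')), by
      linear_combination hx' + d * h5 - (α * x' + β * (u * s + v * (x' * x'))) * hc⟩
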